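/- For every d ≥ 1 there exist a constant C > 0 and a weight w on ℝ^d satisfying the local A₁ condition Mw(x) ≤ C w(x) for every x in the support of w, such that for every ε > 0 the function w^{1+ε} is not locally integrable on ℝ^d. In particular, weights satisfying the local A₁ condition need not satisfy any reverse Hölder inequality. -/

import Mathlib

open MeasureTheory Filter Set Metric
open scoped ENNReal Topology NNReal

noncomputable section

/-- The closed axis-parallel cube centered at `c` with half-edge `r` in `ℝ^d`. -/
def cube {d : ℕ} (c : EuclideanSpace ℝ (Fin d)) (r : ℝ) : Set (EuclideanSpace ℝ (Fin d)) :=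
  {y | ∀ i, |y i - c i| ≤ r}

/-- The non-centered Hardy–Littlewood maximal function over axis-parallel cubes,
with values in `ℝ≥0∞`. -/
def maximal {d : ℕ} (f : EuclideanSpace ℝ (Fin d) → ℝ) (x : EuclideanSpace ℝ (Fin d)) : ℝ≥0∞ :=
  ⨆ (c : EuclideanSpace ℝ (Fin d)) (r : ℝ) (_ : 0 < r) (_ : x ∈ cube c r),
    (∫⁻ y in cube c r, (‖f y‖₊ : ℝ≥0∞)) / volume (cube c r)

/-- The centered Hardy–Littlewood maximal function over axis-parallel cubes. -/
def cmaximal {d : ℕ} (f : EuclideanSpace ℝ (Fin d) → ℝ) (x : EuclideanSpace ℝ (Fin d)) : ℝ≥0∞ :=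
  ⨆ (r : ℝ) (_ : 0 < r),
    (∫⁻ y in cube x r, (‖f y‖₊ : ℝ≥0∞)) / volume (cube x r)

section CubeLemmas
variable {d : ℕ}
lemma cube_eq (c : EuclideanSpace ℝ (Fin d)) (r : ℝ) :
    cube c r = ((MeasurableEquiv.toLp 2 (Fin d → ℝ)).symm) ⁻¹'
      (Set.pi Set.univ fun i => Icc (c i - r) (c i + r)) := by
  ext x
  simp only [cube, mem_setOf_eq, mem_preimage, Set.mem_pi, mem_univ, forall_true_left, mem_Icc]
  have hx : ∀ i, ((MeasurableEquiv.toLp 2 (Fin d → ℝ)).symm) x i = x i := fun _ => rfl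
  simp only [hx, abs_le]
  constructor
  · exact fun h i => ⟨by linarith [(h i).1], by linarith [(h i).2]⟩
  · exact fun h i => ⟨by linarith [(h i).1], by linarith [(h i).2]⟩

lemma measurableSet_cube (c : EuclideanSpace ℝ (Fin d)) (r : ℝ) : MeasurableSet (cube c r) := by
  rw [cube_eq]
  exact ((MeasurableEquiv.toLp 2 (Fin d → ℝ)).symm).measurable
    (MeasurableSet.univ_pi fun i => measurableSet_Icc)

lemma volume_cube (c : EuclideanSpace ℝ (Fin d)) {r : ℝ} (hr : 0 ≤ r) :
    volume (cube c r) = ENNReal.ofReal ((2*r)^d) := by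
  rw [cube_eq, (EuclideanSpace.volume_preserving_symm_measurableEquiv_toLp (Fin d)).measure_preimage
    ((MeasurableSet.univ_pi fun i => measurableSet_Icc).nullMeasurableSet)]
  rw [volume_pi_pi]
  have h2 : ∀ i : Fin d, c i + r - (c i - r) = 2*r := fun i => by ring
  simp only [Real.volume_Icc, h2]
  rw [Finset.prod_const, ← ENNReal.ofReal_pow (by linarith)]
  simp

end CubeLemmas

namespace NRH

def F (x : ℝ) : ℝ := (4:ℝ) ^ x
lemma F_pos (x : ℝ) : 0 < F x := Real.rpow_pos_of_pos (by norm_num) x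
lemma F_add (x y : ℝ) : F (x + y) = F x * F y := Real.rpow_add (by norm_num) x y
lemma F_mono {x y : ℝ} (h : x ≤ y) : F x ≤ F y :=
  Real.rpow_le_rpow_left_iff (by norm_num : (1:ℝ) < 4) |>.mpr h
lemma F_zero : F 0 = 1 := Real.rpow_zero 4
lemma F_pow (x : ℝ) (k : ℕ) : (F x)^k = F (k * x) := by
  rw [F, F, ← Real.rpow_natCast ((4:ℝ)^x) k, ← Real.rpow_mul (by norm_num), mul_comm]
lemma F_le_one {x : ℝ} (hx : x ≤ 0) : F x ≤ 1 :=
  Real.rpow_le_one_of_one_le_of_nonpos (by norm_num) hx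
lemma F_neg (x : ℝ) : F (-x) = (F x)⁻¹ := Real.rpow_neg (by norm_num) x

lemma sqrt_le_aux {x K : ℝ} (hx : 0 ≤ x) (hK : 0 < K) :
    Real.sqrt x ≤ x / (2*K) + K/2 := by
  have h := sq_nonneg (Real.sqrt x - K)
  rw [sub_sq, Real.sq_sqrt hx] at h
  rw [div_add_div _ _ (by positivity) (by norm_num), le_div_iff₀ (by positivity)]
  nlinarith [Real.sqrt_nonneg x]

lemma le_F_sqrt (n : ℕ) : (n:ℝ)^2 / 256 ≤ F (Real.sqrt n) := by
  have hs : (0:ℝ) ≤ Real.sqrt n := Real.sqrt_nonneg _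
  have hlog : (1:ℝ) ≤ Real.log 4 := by
    rw [Real.le_log_iff_exp_le (by norm_num)]
    exact le_of_lt (by linarith [Real.exp_one_lt_d9])
  have hF : F (Real.sqrt n) = Real.exp (Real.sqrt n * Real.log 4) := by
    rw [F, Real.rpow_def_of_pos (by norm_num), mul_comm]
  have h4 : Real.exp (Real.sqrt n * Real.log 4)
      = (Real.exp (Real.sqrt n * Real.log 4 / 4))^4 := by
    rw [← Real.exp_nat_mul]; ring_nf
  have h5 : Real.sqrt n * Real.log 4 / 4 ≤ Real.exp (Real.sqrt n * Real.log 4 / 4) := by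
    linarith [Real.add_one_le_exp (Real.sqrt n * Real.log 4 / 4)]
  have h6 : (Real.sqrt n / 4)^4 ≤ (Real.exp (Real.sqrt n * Real.log 4 / 4))^4 := by
    apply pow_le_pow_left₀ (by positivity)
    calc Real.sqrt n / 4 ≤ Real.sqrt n * Real.log 4 / 4 := by nlinarith
    _ ≤ _ := h5
  have h7 : (Real.sqrt n / 4)^4 = (n:ℝ)^2 / 256 := by
    have : (Real.sqrt n)^4 = ((Real.sqrt n)^2)^2 := by ring
    rw [div_pow, this, Real.sq_sqrt (by positivity)]
    norm_num
  rw [hF, h4]; rw [← h7]; exact h6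

lemma F_neg_sqrt_le (n : ℕ) : F (-Real.sqrt n) ≤ 1024 / ((n:ℝ)+1)^2 := by
  rcases Nat.eq_zero_or_pos n with h | h
  · subst h; simp [F_zero, Real.sqrt_zero]
  · have h1 : (n:ℝ) ≥ 1 := by exact_mod_cast h
    have h2 := le_F_sqrt n
    have hFpos := F_pos (Real.sqrt n)
    rw [F_neg, inv_eq_one_div, div_le_div_iff₀ hFpos (by positivity)]
    nlinarith

lemma summable_F_neg_sqrt : Summable (fun n : ℕ => F (-Real.sqrt n)) := by
  apply Summable.of_nonneg_of_le (fun n => (F_pos _).le) F_neg_sqrt_le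
  have h : Summable (fun n : ℕ => 1 / ((n:ℝ))^2) := Real.summable_one_div_nat_pow.2 one_lt_two
  have h2 := (summable_nat_add_iff 1).2 h
  simpa [div_eq_mul_inv, mul_comm] using h2.mul_left 1024



variable (d : ℕ)

def aa (n : ℕ) : ℝ := F (d * n)
def tt (n : ℕ) : ℝ := F (-(n:ℝ))
def rho (n : ℕ) : ℝ := F (-(Real.sqrt n)/d)
def rr (n : ℕ) : ℝ := tt n * rho d n / 8

lemma aa_pos (n : ℕ) : 0 < aa d n := F_pos _
lemma tt_pos (n : ℕ) : 0 < tt n := F_pos _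
lemma rr_pos (n : ℕ) : 0 < rr d n := by
  have := tt_pos n; have := F_pos (-(Real.sqrt n)/d); unfold rr rho; positivity
lemma rho_le_one (n : ℕ) : rho d n ≤ 1 := by
  apply F_le_one
  have : (0:ℝ) ≤ Real.sqrt n := Real.sqrt_nonneg _
  have hd : (0:ℝ) ≤ d := Nat.cast_nonneg d
  rw [neg_div]
  simp only [neg_nonpos]
  positivity
lemma rr_le (n : ℕ) : rr d n ≤ tt n / 8 := by
  unfold rr
  have h1 := rho_le_one d n
  have h2 := (tt_pos n).le
  nlinarith
lemma tt_anti {n m : ℕ} (h : n ≤ m) : tt m ≤ tt n := F_mono (by exact_mod_cast neg_le_neg (by exact_mod_cast h : (n:ℝ) ≤ m))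
lemma tt_succ_le (n : ℕ) : tt (n+1) ≤ tt n / 4 := by
  have : tt (n+1) = tt n * F (-1) := by
    rw [tt, tt, ← F_add]; congr 1; push_cast; ring
  rw [this]
  have : F (-1) = 1/4 := by
    rw [F_neg]; norm_num [F, Real.rpow_one]
  rw [this]; ring_nf; rfl
lemma aa_mono {n m : ℕ} (h : n ≤ m) : aa d n ≤ aa d m := by
  apply F_mono
  have : (n:ℝ) ≤ m := by exact_mod_cast h
  have hd : (0:ℝ) ≤ d := Nat.cast_nonneg d
  nlinarith
lemma tt_le_one (n : ℕ) : tt n ≤ 1 := by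
  rw [← F_zero]; apply F_mono; simp [Nat.cast_nonneg]

variable (hd : 0 < d)

def pt (n : ℕ) : EuclideanSpace ℝ (Fin d) := EuclideanSpace.single ⟨0, hd⟩ (tt n)
def Qn (n : ℕ) : Set (EuclideanSpace ℝ (Fin d)) := cube (pt d hd n) (rr d n)

lemma pt_apply_zero (n : ℕ) : pt d hd n ⟨0, hd⟩ = tt n := by
  rw [pt, EuclideanSpace.single_apply, if_pos rfl]

-- coordinate bounds for points of Qn
lemma coord_lb {n : ℕ} {x : EuclideanSpace ℝ (Fin d)} (hx : x ∈ Qn d hd n) :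
    7/8 * tt n ≤ x ⟨0, hd⟩ := by
  have h := hx ⟨0, hd⟩
  rw [pt_apply_zero] at h
  have := abs_le.1 h
  have h2 := rr_le d n
  have h3 := (tt_pos n).le
  linarith [this.1]

lemma coord_ub {n : ℕ} {x : EuclideanSpace ℝ (Fin d)} (hx : x ∈ Qn d hd n) :
    x ⟨0, hd⟩ ≤ 9/8 * tt n := by
  have h := hx ⟨0, hd⟩
  rw [pt_apply_zero] at h
  have := abs_le.1 h
  have h2 := rr_le d n
  linarith [this.2]

lemma Qn_disjoint : Pairwise (Function.onFun Disjoint (Qn d hd)) := by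
  intro n m hnm
  wlog h : n < m generalizing n m
  · exact (this hnm.symm (by omega)).symm
  rw [Function.onFun, Set.disjoint_left]
  intro x hxn hxm
  have h1 := coord_lb d hd hxn
  have h2 := coord_ub d hd hxm
  have h3 : tt m ≤ tt (n+1) := tt_anti (by omega)
  have h4 := tt_succ_le n
  have h5 := tt_pos n
  have h6 := tt_pos m
  linarith

lemma gap {n₀ n : ℕ} (hlt : n₀ < n) {x y : EuclideanSpace ℝ (Fin d)}
    (hx : x ∈ Qn d hd n₀) (hy : y ∈ Qn d hd n)
    {c : EuclideanSpace ℝ (Fin d)} {r : ℝ} (hxc : x ∈ cube c r) (hyc : y ∈ cube c r) :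
    tt n₀ / 2 ≤ 2 * r := by
  have h1 := coord_lb d hd hx
  have h2 := coord_ub d hd hy
  have h3 : tt n ≤ tt (n₀+1) := tt_anti (by omega)
  have h4 := tt_succ_le n₀
  have h5 := tt_pos n₀
  have hxc0 := abs_le.1 (hxc ⟨0, hd⟩)
  have hyc0 := abs_le.1 (hyc ⟨0, hd⟩)
  linarith

lemma Qn_subset_ball {n : ℕ} : Qn d hd n ⊆ closedBall (0 : EuclideanSpace ℝ (Fin d)) (2 * Real.sqrt d) := by
  intro x hx
  rw [mem_closedBall]
  have hcoord : ∀ i, |x i| ≤ 2 := by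
    intro i
    have h := hx i
    have hpt : |pt d hd n i| ≤ 1 := by
      rw [pt, EuclideanSpace.single_apply]
      split
      · rw [abs_of_pos (tt_pos n)]; exact tt_le_one n
      · simp
    have h2 := rr_le d n
    have h3 := tt_le_one n
    have h4 := tt_pos n
    have habs : |x i| ≤ |x i - pt d hd n i| + |pt d hd n i| := by
      calc |x i| = |(x i - pt d hd n i) + pt d hd n i| := by ring_nf
      _ ≤ _ := abs_add_le _ _
    linarith
  have : dist x 0 = Real.sqrt (∑ i, dist (x i) ((0:EuclideanSpace ℝ (Fin d)) i)^2) :=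
    EuclideanSpace.dist_eq x 0
  rw [this]
  have hsum : (∑ i, dist (x i) ((0:EuclideanSpace ℝ (Fin d)) i)^2) ≤ (d:ℝ) * 4 := by
    calc (∑ i, dist (x i) ((0:EuclideanSpace ℝ (Fin d)) i)^2) ≤ ∑ _i : Fin d, (4:ℝ) := by
          apply Finset.sum_le_sum
          intro i _
          have : dist (x i) ((0:EuclideanSpace ℝ (Fin d)) i) = |x i| := by
            simp [Real.dist_eq]
          rw [this]
          nlinarith [hcoord i, abs_nonneg (x i)]
    _ = (d:ℝ) * 4 := by simp [Finset.sum_const, mul_comm]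
  calc Real.sqrt (∑ i, dist (x i) ((0:EuclideanSpace ℝ (Fin d)) i)^2)
      ≤ Real.sqrt ((d:ℝ)*4) := Real.sqrt_le_sqrt hsum
  _ = 2 * Real.sqrt d := by
      rw [show (d:ℝ)*4 = 4*d by ring, Real.sqrt_mul (by norm_num) d,
        show (4:ℝ) = 2^2 by norm_num, Real.sqrt_sq (by norm_num)]

lemma htt_pow (n : ℕ) : (tt n)^d = F (-((d:ℝ) * n)) := by
  rw [tt, F_pow]; congr 1; ring

lemma mass_eq (hd : 0 < d) (n : ℕ) : aa d n * (2 * rr d n)^d = F (-Real.sqrt n - d) := by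
  have hd' : (d:ℝ) ≠ 0 := Nat.cast_ne_zero.mpr hd.ne'
  have h4 : ((4:ℝ))^d = F d := by rw [F, Real.rpow_natCast]
  have h2 : 2 * rr d n = tt n * rho d n / 4 := by rw [rr]; ring
  have hrho : (rho d n)^d = F (-Real.sqrt n) := by
    rw [rho, F_pow]; congr 1; field_simp
  rw [h2, div_pow, mul_pow, htt_pow, hrho, h4, aa]
  rw [div_eq_mul_inv, ← F_neg, ← F_add, ← F_add, ← F_add]
  congr 1
  push_cast
  ring

lemma key_one (n : ℕ) : (2:ℝ)^d * (aa d n * (tt n / 2)^d) = 1 := by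
  have h2 : ((2:ℝ))^d ≠ 0 := by positivity
  have key : aa d n * (tt n)^d = 1 := by
    rw [aa, htt_pow, ← F_add]
    push_cast
    rw [show (d:ℝ)*n + -((d:ℝ)*n) = 0 by ring, F_zero]
  calc (2:ℝ)^d * (aa d n * ((tt n / 2))^d) = aa d n * (tt n)^d := by
        rw [div_pow]; field_simp
  _ = 1 := key

lemma le_F_self {x : ℝ} (hx : 0 ≤ x) : x ≤ F x := by
  have hlog : (1:ℝ) ≤ Real.log 4 := by
    rw [Real.le_log_iff_exp_le (by norm_num)]
    exact le_of_lt (by linarith [Real.exp_one_lt_d9])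
  have hF : F x = Real.exp (Real.log 4 * x) := by
    rw [F, Real.rpow_def_of_pos (by norm_num)]
  nlinarith [Real.add_one_le_exp (Real.log 4 * x)]

lemma exists_big (hd : 0 < d) {ε B : ℝ} (hε : 0 < ε) : ∃ n : ℕ, B < F ((d:ℝ)*n*ε - Real.sqrt n - d) := by
  set c : ℝ := (d:ℝ)*ε with hc
  have hc0 : 0 < c := by
    have hdp : (0:ℝ) < d := by exact_mod_cast hd
    positivity
  obtain ⟨n, hn⟩ := exists_nat_gt ((|B| + 1 + 1/c + d) * (4/(3*c)))
  refine ⟨n, ?_⟩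
  have hs := sqrt_le_aux (Nat.cast_nonneg n : (0:ℝ) ≤ n) (by positivity : (0:ℝ) < 2/c)
  have hsn : Real.sqrt n ≤ (n:ℝ) * c / 4 + 1/c := by
    have h1 : (n:ℝ) / (2*(2/c)) = (n:ℝ) * c / 4 := by
      rw [div_eq_iff (by positivity)]; field_simp; ring
    have h2 : (2/c)/2 = 1/c := by field_simp
    rw [h1, h2] at hs; exact hs
  have hx : |B| + 1 ≤ (d:ℝ)*n*ε - Real.sqrt n - d := by
    have hnn : (|B| + 1 + 1/c + d) ≤ (3*c/4) * n := by
      have h3c : (0:ℝ) < 3*c/4 := by positivity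
      have h2 := mul_lt_mul_of_pos_right hn h3c
      have heq : ((|B| + 1 + 1/c + (d:ℝ)) * (4/(3*c))) * (3*c/4) = |B| + 1 + 1/c + (d:ℝ) := by
        field_simp
      rw [heq] at h2
      nlinarith
    have hcn : (d:ℝ)*n*ε = c * n := by rw [hc]; ring
    rw [hcn]
    linarith
  have hx0 : 0 ≤ (d:ℝ)*n*ε - Real.sqrt n - d := by
    have : (0:ℝ) ≤ |B| + 1 := by positivity
    linarith
  calc B ≤ |B| := le_abs_self B
  _ < |B| + 1 := by linarith
  _ ≤ (d:ℝ)*n*ε - Real.sqrt n - d := hx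
  _ ≤ F ((d:ℝ)*n*ε - Real.sqrt n - d) := le_F_self hx0

def A (n : ℕ) : ℝ≥0∞ := ENNReal.ofReal (aa d n)

lemma A_ne_top (n : ℕ) : A d n ≠ ∞ := ENNReal.ofReal_ne_top

def W (x : EuclideanSpace ℝ (Fin d)) : ℝ≥0∞ :=
  ∑' n, (Qn d hd n).indicator (fun _ => A d n) x

lemma measurable_W : Measurable (W d hd) :=
  Measurable.ennreal_tsum fun n =>
    Measurable.indicator measurable_const (measurableSet_cube _ _)

lemma W_eq_on {n : ℕ} {x : EuclideanSpace ℝ (Fin d)} (hx : x ∈ Qn d hd n) :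
    W d hd x = A d n := by
  rw [W, tsum_eq_single n]
  · rw [indicator_of_mem hx]
  · intro m hm
    apply indicator_of_notMem
    intro hxm
    exact (Qn_disjoint d hd hm).le_bot ⟨hxm, hx⟩

lemma W_eq_zero {x : EuclideanSpace ℝ (Fin d)} (hx : ∀ n, x ∉ Qn d hd n) : W d hd x = 0 := by
  rw [W]
  convert tsum_zero with n
  exact indicator_of_notMem (hx n) _

lemma W_ne_top (x : EuclideanSpace ℝ (Fin d)) : W d hd x ≠ ∞ := by
  by_cases h : ∃ n, x ∈ Qn d hd n
  · obtain ⟨n, hn⟩ := h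
    rw [W_eq_on d hd hn]; exact A_ne_top d n
  · push_neg at h
    rw [W_eq_zero d hd h]; exact ENNReal.zero_ne_top

def w (x : EuclideanSpace ℝ (Fin d)) : ℝ := (W d hd x).toReal

lemma w_nonneg : 0 ≤ w d hd := fun _ => ENNReal.toReal_nonneg

lemma w_eq_on {n : ℕ} {x : EuclideanSpace ℝ (Fin d)} (hx : x ∈ Qn d hd n) :
    w d hd x = aa d n := by
  rw [w, W_eq_on d hd hx, A, ENNReal.toReal_ofReal (aa_pos d n).le]

lemma nnnorm_w (x : EuclideanSpace ℝ (Fin d)) : (‖w d hd x‖₊ : ℝ≥0∞) = W d hd x := by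
  rw [w, ← enorm_eq_nnnorm, Real.enorm_eq_ofReal ENNReal.toReal_nonneg,
    ENNReal.ofReal_toReal (W_ne_top d hd x)]

lemma setLIntegral_W {S : Set (EuclideanSpace ℝ (Fin d))} (hS : MeasurableSet S) :
    ∫⁻ x in S, W d hd x = ∑' n, A d n * volume (Qn d hd n ∩ S) := by
  calc ∫⁻ x in S, W d hd x
      = ∑' n, ∫⁻ x in S, (Qn d hd n).indicator (fun _ => A d n) x :=
        lintegral_tsum fun n =>
          (Measurable.indicator measurable_const (measurableSet_cube _ _)).aemeasurable
  _ = ∑' n, A d n * volume (Qn d hd n ∩ S) := by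
      congr 1
      funext n
      rw [Qn, lintegral_indicator (measurableSet_cube _ _), setLIntegral_const,
        Measure.restrict_apply (measurableSet_cube _ _)]

lemma A_mul_vol (n : ℕ) :
    A d n * volume (Qn d hd n) = ENNReal.ofReal (F (-Real.sqrt n - d)) := by
  rw [Qn, volume_cube _ (rr_pos d n).le, A,
    ← ENNReal.ofReal_mul (aa_pos d n).le, mass_eq d hd n]

lemma summable_mass : Summable (fun n : ℕ => F (-Real.sqrt n - d)) := by
  have h : ∀ n : ℕ, F (-Real.sqrt n - d) = F (-Real.sqrt n) * F (-(d:ℝ)) := fun n => by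
    rw [sub_eq_add_neg, F_add]
  simp only [h]
  exact summable_F_neg_sqrt.mul_right _

def ME : ℝ≥0∞ := ∑' n : ℕ, ENNReal.ofReal (F (-Real.sqrt n - d))

lemma ME_ne_top : ME d ≠ ∞ := by
  rw [ME, ← ENNReal.ofReal_tsum_of_nonneg (fun n => (F_pos _).le) (summable_mass d)]
  exact ENNReal.ofReal_ne_top

lemma lintegral_W : ∫⁻ x, W d hd x = ME d := by
  rw [← setLIntegral_univ, setLIntegral_W d hd MeasurableSet.univ, ME]
  congr 1
  funext n
  rw [inter_univ, A_mul_vol d hd n]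

lemma integrable_w : Integrable (w d hd) volume := by
  apply integrable_toReal_of_lintegral_ne_top (measurable_W d hd).aemeasurable
  rw [lintegral_W d hd]
  exact ME_ne_top d

lemma support_w_subset : Function.support (w d hd) ⊆ ⋃ n, Qn d hd n := by
  intro x hx
  by_contra h
  simp only [mem_iUnion, not_exists] at h
  exact hx (by rw [w, W_eq_zero d hd h, ENNReal.toReal_zero])

lemma maximal_bound {n₀ : ℕ} {x : EuclideanSpace ℝ (Fin d)} (hx : x ∈ Qn d hd n₀)
    {c : EuclideanSpace ℝ (Fin d)} {r : ℝ} (hr : 0 < r) (hxc : x ∈ cube c r) :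
    (∫⁻ y in cube c r, W d hd y) / volume (cube c r)
      ≤ ENNReal.ofReal (aa d n₀) + ME d * ENNReal.ofReal ((2:ℝ)^d * aa d n₀) := by
  set V := volume (cube c r) with hVdef
  have hV : V = ENNReal.ofReal ((2*r)^d) := volume_cube c hr.le
  have hV0 : V ≠ 0 := by
    rw [hV, ne_eq, ENNReal.ofReal_eq_zero, not_le]
    positivity
  have hVtop : V ≠ ∞ := by rw [hV]; exact ENNReal.ofReal_ne_top
  rw [ENNReal.div_le_iff hV0 hVtop, setLIntegral_W d hd (measurableSet_cube c r)]
  have hsplit : ∀ n, A d n * volume (Qn d hd n ∩ cube c r) ≤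
      A d n₀ * volume (Qn d hd n ∩ cube c r)
        + (if n₀ < n then A d n * volume (Qn d hd n ∩ cube c r) else 0) := by
    intro n
    by_cases h : n₀ < n
    · rw [if_pos h]; exact le_add_self
    · rw [if_neg h, add_zero]
      exact mul_le_mul_left (ENNReal.ofReal_le_ofReal (aa_mono d (not_lt.mp h))) _
  have hdisj : ∑' n, volume (Qn d hd n ∩ cube c r) ≤ V := by
    rw [← measure_iUnion
      (fun n m hnm => Disjoint.mono inter_subset_left inter_subset_left (Qn_disjoint d hd hnm))
      (fun n => ((measurableSet_cube _ _).inter (measurableSet_cube _ _)))]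
    exact measure_mono (iUnion_subset fun n => inter_subset_right)
  have hH : (∑' n, (if n₀ < n then A d n * volume (Qn d hd n ∩ cube c r) else 0))
      ≤ ME d * ENNReal.ofReal ((2:ℝ)^d * aa d n₀) * V := by
    by_cases hcase : ∃ n, n₀ < n ∧ (Qn d hd n ∩ cube c r).Nonempty
    · obtain ⟨n₁, hlt, y, hy⟩ := hcase
      have hgap := gap d hd hlt hx hy.1 hxc hy.2
      have htpos := tt_pos n₀
      have hV_lb : ENNReal.ofReal ((tt n₀/2)^d) ≤ V := by
        rw [hV]
        exact ENNReal.ofReal_le_ofReal (pow_le_pow_left₀ (by positivity) (by linarith) d)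
      have h1le : (1:ℝ≥0∞) ≤ ENNReal.ofReal ((2:ℝ)^d * aa d n₀) * V := by
        have haa := aa_pos d n₀
        calc (1:ℝ≥0∞) = ENNReal.ofReal ((2:ℝ)^d * (aa d n₀ * (tt n₀/2)^d)) := by
              rw [key_one]; simp
        _ = ENNReal.ofReal ((2:ℝ)^d * aa d n₀) * ENNReal.ofReal ((tt n₀/2)^d) := by
              rw [← ENNReal.ofReal_mul (by positivity)]; congr 1; ring
        _ ≤ ENNReal.ofReal ((2:ℝ)^d * aa d n₀) * V := mul_le_mul_right hV_lb _
      have hterm : ∀ n, (if n₀ < n then A d n * volume (Qn d hd n ∩ cube c r) else 0)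
          ≤ ENNReal.ofReal (F (-Real.sqrt n - d)) := by
        intro n
        split
        · calc A d n * volume (Qn d hd n ∩ cube c r)
              ≤ A d n * volume (Qn d hd n) :=
                mul_le_mul_right (measure_mono inter_subset_left) _
          _ = _ := A_mul_vol d hd n
        · exact zero_le
      calc (∑' n, (if n₀ < n then A d n * volume (Qn d hd n ∩ cube c r) else 0))
          ≤ ME d := ENNReal.tsum_le_tsum hterm
      _ = ME d * 1 := (mul_one _).symm
      _ ≤ ME d * (ENNReal.ofReal ((2:ℝ)^d * aa d n₀) * V) := mul_le_mul_right h1le _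
      _ = ME d * ENNReal.ofReal ((2:ℝ)^d * aa d n₀) * V := (mul_assoc _ _ _).symm
    · push_neg at hcase
      have hzero : ∀ n, (if n₀ < n then A d n * volume (Qn d hd n ∩ cube c r) else 0) = 0 := by
        intro n
        split
        · next h =>
            rw [hcase n h, measure_empty, mul_zero]
        · rfl
      simp only [hzero, tsum_zero]
      exact zero_le
  calc ∑' n, A d n * volume (Qn d hd n ∩ cube c r)
      ≤ ∑' n, (A d n₀ * volume (Qn d hd n ∩ cube c r)
          + (if n₀ < n then A d n * volume (Qn d hd n ∩ cube c r) else 0)) :=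
        ENNReal.tsum_le_tsum hsplit
  _ = (∑' n, A d n₀ * volume (Qn d hd n ∩ cube c r))
        + ∑' n, (if n₀ < n then A d n * volume (Qn d hd n ∩ cube c r) else 0) :=
        ENNReal.tsum_add
  _ ≤ A d n₀ * V + ME d * ENNReal.ofReal ((2:ℝ)^d * aa d n₀) * V := by
        refine add_le_add ?_ hH
        rw [ENNReal.tsum_mul_left]
        exact mul_le_mul_right hdisj _
  _ = (ENNReal.ofReal (aa d n₀) + ME d * ENNReal.ofReal ((2:ℝ)^d * aa d n₀)) * V := by
        rw [A]; ring

end NRH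

/-- **No reverse Hölder inequality for local `A₁` weights.** In each dimension `d ≥ 1`
there are a constant `C > 0` and a weight `w` with `Mw ≤ C w` everywhere on the
support of `w`, such that for every `ε > 0` the function `w^{1+ε}` is not locally
integrable. -/
theorem local_A1_weight_without_reverse_holder (d : ℕ) (hd : 1 ≤ d) :
    ∃ (C : ℝ) (w : EuclideanSpace ℝ (Fin d) → ℝ),
      0 < C ∧ 0 ≤ w ∧ LocallyIntegrable w volume ∧
      (∀ x ∈ Function.support w, maximal w x ≤ ENNReal.ofReal (C * w x)) ∧
      ∀ ε : ℝ, 0 < ε →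
        ¬ LocallyIntegrable (fun x => w x ^ (1 + ε)) volume := by
  have hd0 : 0 < d := hd
  refine ⟨1 + (NRH.ME d).toReal * 2^d, NRH.w d hd0, ?_, NRH.w_nonneg d hd0,
    (NRH.integrable_w d hd0).locallyIntegrable, ?_, ?_⟩
  · have h1 : 0 ≤ (NRH.ME d).toReal * 2^d := by positivity
    linarith
  · intro x hx
    obtain ⟨n₀, hn₀⟩ : ∃ n, x ∈ NRH.Qn d hd0 n := by
      have h := NRH.support_w_subset d hd0 hx
      simpa [mem_iUnion] using h
    rw [NRH.w_eq_on d hd0 hn₀, maximal]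
    apply iSup_le; intro c; apply iSup_le; intro r; apply iSup_le; intro hr
    apply iSup_le; intro hxc
    have hnum : ∫⁻ y in cube c r, (‖NRH.w d hd0 y‖₊ : ℝ≥0∞) = ∫⁻ y in cube c r, NRH.W d hd0 y :=
      lintegral_congr fun y => NRH.nnnorm_w d hd0 y
    rw [hnum]
    refine le_trans (NRH.maximal_bound d hd0 hn₀ hr hxc) (le_of_eq ?_)
    have hME := NRH.ME_ne_top d
    have haa := NRH.aa_pos d n₀
    rw [show (1 + (NRH.ME d).toReal * 2^d) * NRH.aa d n₀
        = NRH.aa d n₀ + (NRH.ME d).toReal * ((2:ℝ)^d * NRH.aa d n₀) by ring]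
    rw [ENNReal.ofReal_add haa.le (by positivity),
      ENNReal.ofReal_mul ENNReal.toReal_nonneg, ENNReal.ofReal_toReal hME]
  · intro ε hε hLI
    set K := closedBall (0 : EuclideanSpace ℝ (Fin d)) (2*Real.sqrt d) with hKdef
    have hK : IsCompact K := isCompact_closedBall _ _
    have hint : IntegrableOn (fun x => NRH.w d hd0 x ^ (1+ε)) K volume :=
      hLI.integrableOn_isCompact hK
    set B := ∫ x in K, NRH.w d hd0 x ^ (1+ε) with hBdef
    have hnn : 0 ≤ᵐ[volume.restrict K] (fun x => NRH.w d hd0 x ^ (1+ε)) :=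
      Filter.Eventually.of_forall fun x => Real.rpow_nonneg (NRH.w_nonneg d hd0 x) _
    have hmono : ∀ n, ∫ x in NRH.Qn d hd0 n, NRH.w d hd0 x ^ (1+ε) ≤ B := fun n =>
      setIntegral_mono_set hint hnn ((NRH.Qn_subset_ball d hd0).eventuallyLE)
    have hval : ∀ n, ∫ x in NRH.Qn d hd0 n, NRH.w d hd0 x ^ (1+ε)
        = NRH.aa d n ^ (1+ε) * (2*NRH.rr d n)^d := by
      intro n
      rw [setIntegral_congr_fun (s := NRH.Qn d hd0 n)
        (measurableSet_cube _ _)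
        (fun x hx => by rw [NRH.w_eq_on d hd0 hx])]
      rw [setIntegral_const, smul_eq_mul, NRH.Qn, measureReal_def, volume_cube _ (NRH.rr_pos d n).le,
        ENNReal.toReal_ofReal (pow_nonneg (by linarith [NRH.rr_pos d n]) d)]
      ring
    have hgrow : ∀ n : ℕ, NRH.aa d n ^ (1+ε) * (2*NRH.rr d n)^d
        = NRH.F ((d:ℝ)*n*ε - Real.sqrt n - d) := by
      intro n
      have h1 : NRH.aa d n ^ (1+ε) = NRH.aa d n * NRH.aa d n ^ ε := by
        rw [Real.rpow_add (NRH.aa_pos d n), Real.rpow_one]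
      have h2 : NRH.aa d n ^ ε = NRH.F (((d*n : ℕ):ℝ) * ε) := by
        rw [NRH.aa, NRH.F, NRH.F, ← Real.rpow_mul (by norm_num)]
        norm_cast
      calc NRH.aa d n ^ (1+ε) * (2*NRH.rr d n)^d
          = NRH.aa d n ^ ε * (NRH.aa d n * (2*NRH.rr d n)^d) := by rw [h1]; ring
      _ = NRH.F (((d*n : ℕ):ℝ) * ε) * NRH.F (-Real.sqrt n - d) := by
          rw [h2, NRH.mass_eq d hd0 n]
      _ = _ := by rw [← NRH.F_add]; congr 1; push_cast; ring
    obtain ⟨n, hn⟩ := NRH.exists_big d hd0 hε (B := B)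
    have hle := hmono n
    rw [hval n, hgrow n] at hle
    exact absurd hle (not_le.mpr hn)
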